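/- For any n×n complex matrices X and Y, the derivative of the matrix exponential satisfies De^X(Y) = ∫₀¹ e^{tX} Y e^{(1−t)X} dt, where De^X denotes the Fréchet derivative of the exponential map at X. -/

import Mathlib

attribute [local instance] Matrix.linftyOpNormedAddCommGroup Matrix.linftyOpNormedSpace
  Matrix.linftyOpNormedRing Matrix.linftyOpNormedAlgebra

open NormedSpace MeasureTheory intervalIntegral

namespace FderivMatrixExpAux

variable {n : ℕ}

local notation "M" => Matrix (Fin n) (Fin n) ℂ

lemma cont_smul_exp (A : M) : Continuous fun s : ℝ => exp (s • A) :=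
  exp_continuous.comp (continuous_id.smul continuous_const)

/-- Duhamel's formula. -/
lemma duhamel (A B : M) :
    exp A - exp B =
      ∫ s in (0:ℝ)..1, exp (s • A) * (A - B) * exp ((1 - s) • B) := by
  have hderiv : ∀ s : ℝ, HasDerivAt (fun s : ℝ => exp (s • A) * exp ((1 - s) • B))
      (exp (s • A) * (A - B) * exp ((1 - s) • B)) s := by
    intro s
    have h1 : HasDerivAt (fun s : ℝ => exp (s • A)) (exp (s • A) * A) s :=
      hasDerivAt_exp_smul_const A s
    have h2' : HasDerivAt (fun u : ℝ => exp (u • B)) (B * exp ((1 - s) • B)) (1 - s) :=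
      hasDerivAt_exp_smul_const' B (1 - s)
    have hlin : HasDerivAt (fun s : ℝ => 1 - s) (-1) s := by
      simpa using (hasDerivAt_id s).const_sub 1
    have h2 : HasDerivAt (fun s : ℝ => exp ((1 - s) • B))
        ((-1 : ℝ) • (B * exp ((1 - s) • B))) s := h2'.scomp s hlin
    have hmul := h1.mul h2
    suffices e : exp (s • A) * (A - B) * exp ((1 - s) • B) = exp (s • A) * A * exp ((1 - s) • B)
        + exp (s • A) * (-1 : ℝ) • (B * exp ((1 - s) • B)) by rw [e]; exact hmul
    simp only [neg_one_smul]
    noncomm_ring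
  have hcont : Continuous fun s : ℝ => exp (s • A) * (A - B) * exp ((1 - s) • B) := by
    refine ((cont_smul_exp A).mul continuous_const).mul ?_
    exact (cont_smul_exp B).comp (continuous_const.sub continuous_id)
  have hint :=
    hcont.intervalIntegrable (μ := volume) 0 1
  have := intervalIntegral.integral_eq_sub_of_hasDerivAt (fun s _ => hderiv s) hint
  rw [this]
  simp [exp_zero]

lemma hasDeriv_line (X Y : M) :
    HasDerivAt (fun h : ℝ => exp (X + h • Y))
      (∫ s in (0:ℝ)..1, exp (s • X) * Y * exp ((1 - s) • X)) 0 := by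
  set G : ℝ → M :=
    fun h => ∫ s in (0:ℝ)..1, exp (s • (X + h • Y)) * Y * exp ((1 - s) • X) with hG
  have huncurry : Continuous (Function.uncurry
      fun (h s : ℝ) => exp (s • (X + h • Y)) * Y * exp ((1 - s) • X)) := by
    refine Continuous.mul (Continuous.mul ?_ continuous_const) ?_
    · exact exp_continuous.comp
        (continuous_snd.smul (continuous_const.add (continuous_fst.smul continuous_const)))
    · exact exp_continuous.comp ((continuous_const.sub continuous_snd).smul continuous_const)
  have hGcont : Continuous G :=
    continuous_parametric_intervalIntegral_of_continuous' huncurry 0 1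
  have hkey : ∀ h : ℝ, exp (X + h • Y) - exp X = h • G h := by
    intro h
    rw [duhamel (X + h • Y) X, hG]
    simp only [add_sub_cancel_left]
    rw [← intervalIntegral.integral_smul]
    congr 1
    funext s
    simp [mul_smul_comm, smul_mul_assoc]
  have hG0 : G 0 = ∫ s in (0:ℝ)..1, exp (s • X) * Y * exp ((1 - s) • X) := by
    simp [hG]
  rw [← hG0]; refine hasDerivAt_iff_tendsto_slope.mpr ?_
  have hslope : ∀ᶠ h in nhdsWithin (0:ℝ) {(0:ℝ)}ᶜ,
      G h = slope (fun h : ℝ => exp (X + h • Y)) 0 h := by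
    filter_upwards [self_mem_nhdsWithin] with h hh
    have h0 : h ≠ 0 := hh
    rw [slope_def_module]
    simp only [sub_zero, zero_smul, add_zero]
    rw [hkey h, smul_smul, inv_mul_cancel₀ h0, one_smul]
  exact ((hGcont.tendsto 0).mono_left nhdsWithin_le_nhds).congr' hslope

noncomputable def entryCLM (i j : Fin n) : M →L[ℝ] ℂ :=
  LinearMap.toContinuousLinearMap
    { toFun := fun A : M => A i j
      map_add' := fun _ _ => rfl
      map_smul' := fun _ _ => rfl }

end FderivMatrixExpAux

open FderivMatrixExpAux NormedSpace MeasureTheory in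
/-- The Fréchet derivative of the matrix exponential:
`De^X(Y) = ∫₀¹ e^{tX} Y e^{(1-t)X} dt` (stated entrywise). -/
theorem fderiv_matrix_exp {n : ℕ} (X Y : Matrix (Fin n) (Fin n) ℂ) :
    ∀ i j, fderiv ℝ (NormedSpace.exp) X Y i j =
      ∫ t in (0:ℝ)..1,
        (NormedSpace.exp (t • X) * Y * NormedSpace.exp ((1 - t) • X)) i j := by
  intro i j
  have hrw : (NormedSpace.exp : Matrix (Fin n) (Fin n) ℂ → Matrix (Fin n) (Fin n) ℂ)
      = NormedSpace.exp := rfl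
  rw [hrw]
  have hd : DifferentiableAt ℝ (exp : Matrix (Fin n) (Fin n) ℂ → Matrix (Fin n) (Fin n) ℂ) X :=
    (exp_analytic X).differentiableAt
  have hline : HasDerivAt (fun h : ℝ => X + h • Y) Y 0 := by
    have h := ((hasDerivAt_id (0:ℝ)).smul_const Y).const_add X; rw [one_smul] at h; exact h
  have hd' : HasFDerivAt (exp) (fderiv ℝ (exp) X) (X + (0:ℝ) • Y) := by
    simpa using hd.hasFDerivAt
  have hcomp : HasDerivAt (fun h : ℝ => exp (X + h • Y)) (fderiv ℝ (exp) X Y) 0 := by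
    exact hd'.comp_hasDerivAt 0 hline
  have hmain : fderiv ℝ (exp) X Y
      = ∫ s in (0:ℝ)..1, exp (s • X) * Y * exp ((1 - s) • X) :=
    hcomp.unique (hasDeriv_line X Y)
  rw [hmain]
  have hint := Continuous.intervalIntegrable (μ := volume)
    (show Continuous (fun s : ℝ => exp (s • X) * Y * exp ((1 - s) • X)) from
    (((cont_smul_exp X).mul continuous_const).mul
      ((cont_smul_exp X).comp (continuous_const.sub continuous_id)))) 0 1
  exact ((entryCLM i j).intervalIntegral_comp_comm hint).symm
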